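/- Let (H_k, k) and (H_ℓ, ℓ) be RKHSs on a set X and let (λ_i) be a sequence of distinct points of X. If (λ_i) is interpolating for Mult(H_k, H_ℓ), then the Gram matrix of (λ_i) with respect to k is bounded and the Gram matrix of (λ_i) with respect to ℓ is bounded below. -/

import Mathlib

noncomputable section

open scoped InnerProductSpace ComplexOrder BoundedContinuousFunction

set_option synthInstance.maxHeartbeats 1000000
set_option maxHeartbeats 1000000

/-- `φ : X → ℂ` is a multiplier from the RKHS on `X` with kernel map `k` to the RKHS with
kernel map `l`, implemented by the bounded operator `T`, i.e. `T* l_x = conj (φ x) • k_x`. -/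
def IsMultiplier {X Hk Hl : Type*}
    [NormedAddCommGroup Hk] [InnerProductSpace ℂ Hk] [CompleteSpace Hk]
    [NormedAddCommGroup Hl] [InnerProductSpace ℂ Hl] [CompleteSpace Hl]
    (k : X → Hk) (l : X → Hl) (φ : X → ℂ) (T : Hk →L[ℂ] Hl) : Prop :=
  ∀ x, ContinuousLinearMap.adjoint T (l x) = (starRingEnd ℂ) (φ x) • k x

/-- The sequence `lam` is an interpolating sequence for `Mult(H_k, H_l)`: every bounded
sequence of targets `α i * ‖l (lam i)‖ / ‖k (lam i)‖` is attained by a multiplier. -/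
def InterpMultPair {X Hk Hl : Type*}
    [NormedAddCommGroup Hk] [InnerProductSpace ℂ Hk] [CompleteSpace Hk]
    [NormedAddCommGroup Hl] [InnerProductSpace ℂ Hl] [CompleteSpace Hl]
    (k : X → Hk) (l : X → Hl) (lam : ℕ → X) : Prop :=
  ∀ α : ℕ → ℂ, (∃ B : ℝ, ∀ i, ‖α i‖ ≤ B) →
    ∃ (φ : X → ℂ) (T : Hk →L[ℂ] Hl), IsMultiplier k l φ T ∧
      ∀ i, φ (lam i) = α i * (‖l (lam i)‖ : ℂ) / (‖k (lam i)‖ : ℂ)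

/-- The Gram matrix of the sequence `lam` with respect to the kernel map `k` is bounded. -/
def GramBdd {X H : Type*} [NormedAddCommGroup H] [InnerProductSpace ℂ H]
    (k : X → H) (lam : ℕ → X) : Prop :=
  ∃ C > (0 : ℝ), ∀ (F : Finset ℕ) (a : ℕ → ℂ),
    ‖∑ i ∈ F, a i • (‖k (lam i)‖⁻¹ • k (lam i))‖ ^ 2 ≤ C * ∑ i ∈ F, ‖a i‖ ^ 2

/-- The Gram matrix of the sequence `lam` with respect to the kernel map `k` is
bounded below. -/
def GramBddBelow {X H : Type*} [NormedAddCommGroup H] [InnerProductSpace ℂ H]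
    (k : X → H) (lam : ℕ → X) : Prop :=
  ∃ c > (0 : ℝ), ∀ (F : Finset ℕ) (a : ℕ → ℂ),
    c * ∑ i ∈ F, ‖a i‖ ^ 2 ≤ ‖∑ i ∈ F, a i • (‖k (lam i)‖⁻¹ • k (lam i))‖ ^ 2

lemma sign_choice_le {H : Type*} [NormedAddCommGroup H] [InnerProductSpace ℂ H]
    (u : ℕ → H) (a : ℕ → ℂ) (F : Finset ℕ) :
    ∃ s : ℕ → ℂ, (∀ i, ‖s i‖ = 1) ∧
      ‖∑ i ∈ F, (s i * a i) • u i‖ ^ 2 ≤ ∑ i ∈ F, ‖a i‖ ^ 2 * ‖u i‖ ^ 2 := by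
  classical
  induction F using Finset.induction_on with
  | empty => exact ⟨fun _ => 1, fun _ => norm_one, by simp⟩
  | @insert j F hj ih =>
    obtain ⟨s, hs, hsum⟩ := ih
    set v := ∑ i ∈ F, (s i * a i) • u i with hv
    set w := a j • u j with hw
    have hpar := parallelogram_law_with_norm ℂ w v
    have h1 : ‖-w + v‖ = ‖w - v‖ := by
      have : -w + v = -(w - v) := by abel
      rw [this, norm_neg]
    set σ : ℂ := if ‖w + v‖ ≤ ‖-w + v‖ then 1 else -1 with hσ
    have hσn : ‖σ‖ = 1 := by rw [hσ]; split <;> simp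
    have hmin : ‖σ • w + v‖ ^ 2 ≤ ‖w‖ ^ 2 + ‖v‖ ^ 2 := by
      rw [hσ]; split_ifs with h
      · rw [one_smul]
        nlinarith [norm_nonneg (w + v), norm_nonneg (-w + v)]
      · rw [neg_one_smul]
        push_neg at h
        nlinarith [norm_nonneg (w + v), norm_nonneg (-w + v)]
    refine ⟨Function.update s j σ, ?_, ?_⟩
    · intro i
      rcases eq_or_ne i j with rfl | hij
      · rw [Function.update_self]; exact hσn
      · rw [Function.update_of_ne hij]; exact hs i
    · rw [Finset.sum_insert hj, Finset.sum_insert hj]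
      have hrest : ∑ i ∈ F, (Function.update s j σ i * a i) • u i = v := by
        refine Finset.sum_congr rfl fun i hi => ?_
        rw [Function.update_of_ne (by rintro rfl; exact hj hi)]
      rw [hrest, Function.update_self, mul_smul, ← hw]
      calc ‖σ • w + v‖ ^ 2 ≤ ‖w‖ ^ 2 + ‖v‖ ^ 2 := hmin
        _ ≤ ‖a j‖ ^ 2 * ‖u j‖ ^ 2 + ∑ i ∈ F, ‖a i‖ ^ 2 * ‖u i‖ ^ 2 := by
            rw [hw, norm_smul, mul_pow]; exact add_le_add le_rfl hsum

lemma sign_choice_ge {H : Type*} [NormedAddCommGroup H] [InnerProductSpace ℂ H]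
    (u : ℕ → H) (a : ℕ → ℂ) (F : Finset ℕ) :
    ∃ s : ℕ → ℂ, (∀ i, ‖s i‖ = 1) ∧
      ∑ i ∈ F, ‖a i‖ ^ 2 * ‖u i‖ ^ 2 ≤ ‖∑ i ∈ F, (s i * a i) • u i‖ ^ 2 := by
  classical
  induction F using Finset.induction_on with
  | empty => exact ⟨fun _ => 1, fun _ => norm_one, by simp⟩
  | @insert j F hj ih =>
    obtain ⟨s, hs, hsum⟩ := ih
    set v := ∑ i ∈ F, (s i * a i) • u i with hv
    set w := a j • u j with hw
    have hpar := parallelogram_law_with_norm ℂ w v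
    have h1 : ‖-w + v‖ = ‖w - v‖ := by
      have : -w + v = -(w - v) := by abel
      rw [this, norm_neg]
    set σ : ℂ := if ‖-w + v‖ ≤ ‖w + v‖ then 1 else -1 with hσ
    have hσn : ‖σ‖ = 1 := by rw [hσ]; split <;> simp
    have hmax : ‖w‖ ^ 2 + ‖v‖ ^ 2 ≤ ‖σ • w + v‖ ^ 2 := by
      rw [hσ]; split_ifs with h
      · rw [one_smul]
        nlinarith [norm_nonneg (w + v), norm_nonneg (-w + v)]
      · rw [neg_one_smul]
        push_neg at h
        nlinarith [norm_nonneg (w + v), norm_nonneg (-w + v)]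
    refine ⟨Function.update s j σ, ?_, ?_⟩
    · intro i
      rcases eq_or_ne i j with rfl | hij
      · rw [Function.update_self]; exact hσn
      · rw [Function.update_of_ne hij]; exact hs i
    · rw [Finset.sum_insert hj, Finset.sum_insert hj]
      have hrest : ∑ i ∈ F, (Function.update s j σ i * a i) • u i = v := by
        refine Finset.sum_congr rfl fun i hi => ?_
        rw [Function.update_of_ne (by rintro rfl; exact hj hi)]
      rw [hrest, Function.update_self, mul_smul, ← hw]
      calc ‖a j‖ ^ 2 * ‖u j‖ ^ 2 + ∑ i ∈ F, ‖a i‖ ^ 2 * ‖u i‖ ^ 2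
          ≤ ‖w‖ ^ 2 + ‖v‖ ^ 2 := by
            rw [hw, norm_smul, mul_pow]; exact add_le_add le_rfl hsum
        _ ≤ ‖σ • w + v‖ ^ 2 := hmax


lemma uniform_mult {X Hk Hl : Type*}
    [NormedAddCommGroup Hk] [InnerProductSpace ℂ Hk] [CompleteSpace Hk]
    [NormedAddCommGroup Hl] [InnerProductSpace ℂ Hl] [CompleteSpace Hl]
    (k : X → Hk) (hk : ∀ x, k x ≠ 0) (l : X → Hl) (hl : ∀ x, l x ≠ 0)
    (lam : ℕ → X) (hint : InterpMultPair k l lam) :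
    ∃ C > (0 : ℝ), ∀ ε : ℕ → ℂ, (∀ i, ‖ε i‖ ≤ 1) →
      ∃ T : Hk →L[ℂ] Hl, ‖T‖ ≤ C ∧
        ∀ i, ContinuousLinearMap.adjoint T (‖l (lam i)‖⁻¹ • l (lam i)) =
          (starRingEnd ℂ) (ε i) • (‖k (lam i)‖⁻¹ • k (lam i)) := by
  classical
  have knz : ∀ i, ‖k (lam i)‖ ≠ 0 := fun i => norm_ne_zero_iff.2 (hk _)
  have lnz : ∀ i, ‖l (lam i)‖ ≠ 0 := fun i => norm_ne_zero_iff.2 (hl _)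
  have knzC : ∀ i, (‖k (lam i)‖ : ℂ) ≠ 0 := fun i => by exact_mod_cast knz i
  have lnzC : ∀ i, (‖l (lam i)‖ : ℂ) ≠ 0 := fun i => by exact_mod_cast lnz i
  set kh : ℕ → Hk := fun i => ‖k (lam i)‖⁻¹ • k (lam i) with hkh
  set lh : ℕ → Hl := fun i => ‖l (lam i)‖⁻¹ • l (lam i) with hlh
  have hkh1 : ∀ i, ‖kh i‖ = 1 := fun i => by
    rw [hkh, norm_smul, norm_inv, norm_norm, inv_mul_cancel₀ (knz i)]
  have hlh1 : ∀ i, ‖lh i‖ = 1 := fun i => by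
    rw [hlh, norm_smul, norm_inv, norm_norm, inv_mul_cancel₀ (lnz i)]
  set M : Submodule ℂ (Hk →L[ℂ] Hl) :=
    { carrier := {T | ∀ x, ∃ c : ℂ, ContinuousLinearMap.adjoint T (l x) = c • k x}
      add_mem' := by
        intro T S hT hS x
        obtain ⟨c, hc⟩ := hT x; obtain ⟨d, hd⟩ := hS x
        exact ⟨c + d, by rw [map_add, ContinuousLinearMap.add_apply, hc, hd, add_smul]⟩
      zero_mem' := fun x => ⟨0, by simp⟩
      smul_mem' := by
        intro c T hT x
        obtain ⟨d, hd⟩ := hT x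
        refine ⟨(starRingEnd ℂ) c * d, ?_⟩
        rw [map_smulₛₗ, ContinuousLinearMap.smul_apply, hd, smul_smul] } with hM
  have hMclosed : IsClosed (M : Set (Hk →L[ℂ] Hl)) := by
    have heq : (M : Set (Hk →L[ℂ] Hl)) =
        ⋂ x, ((fun T : Hk →L[ℂ] Hl => ContinuousLinearMap.adjoint T (l x)) ⁻¹'
          ((ℂ ∙ k x : Submodule ℂ Hk) : Set Hk)) := by
      ext T
      simp only [Set.mem_iInter, Set.mem_preimage, SetLike.mem_coe,
        Submodule.mem_span_singleton]
      constructor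
      · intro h x; obtain ⟨c, hc⟩ := h x; exact ⟨c, hc.symm⟩
      · intro h x; obtain ⟨c, hc⟩ := h x; exact ⟨c, hc.symm⟩
    rw [heq]
    refine isClosed_iInter fun x => IsClosed.preimage ?_
      (Submodule.closed_of_finiteDimensional _)
    exact ((ContinuousLinearMap.apply ℂ Hk (l x)).continuous).comp
      (ContinuousLinearMap.adjoint (𝕜 := ℂ) (E := Hk) (F := Hl)).continuous
  haveI : CompleteSpace M := hMclosed.completeSpace_coe
  have hbound : ∀ (T : Hk →L[ℂ] Hl) (i : ℕ), ‖⟪lh i, T (kh i)⟫_ℂ‖ ≤ ‖T‖ := by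
    intro T i
    calc ‖⟪lh i, T (kh i)⟫_ℂ‖ ≤ ‖lh i‖ * ‖T (kh i)‖ := norm_inner_le_norm _ _
      _ ≤ 1 * (‖T‖ * ‖kh i‖) := by
          rw [hlh1 i]; exact mul_le_mul_of_nonneg_left (T.le_opNorm _) zero_le_one
      _ = ‖T‖ := by rw [hkh1 i, one_mul, mul_one]
  let Elin : M →ₗ[ℂ] (ℕ →ᵇ ℂ) :=
    { toFun := fun T => BoundedContinuousFunction.ofNormedAddCommGroupDiscrete
        (fun i => ⟪lh i, (T : Hk →L[ℂ] Hl) (kh i)⟫_ℂ) ‖(T : Hk →L[ℂ] Hl)‖ (hbound T)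
      map_add' := by
        intro T S; ext i
        simp [inner_add_right]
      map_smul' := by
        intro c T; ext i
        simp [inner_smul_right] }
  have hElin_norm : ∀ T : M, ‖Elin T‖ ≤ 1 * ‖T‖ := by
    intro T
    rw [one_mul]
    refine (BoundedContinuousFunction.norm_le (norm_nonneg _)).2 fun i => ?_
    exact hbound T i
  let E : M →L[ℂ] (ℕ →ᵇ ℂ) := Elin.mkContinuous 1 hElin_norm
  have hEapp : ∀ (T : M) (i : ℕ), E T i = ⟪lh i, (T : Hk →L[ℂ] Hl) (kh i)⟫_ℂ := by
    intro T i; rfl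
  -- key computation of E values through the multiplier relation
  have hcomp : ∀ (T : Hk →L[ℂ] Hl) (i : ℕ) (c : ℂ),
      ContinuousLinearMap.adjoint T (l (lam i)) = c • k (lam i) →
      ⟪lh i, T (kh i)⟫_ℂ =
        (starRingEnd ℂ) c * (‖k (lam i)‖ : ℂ) / (‖l (lam i)‖ : ℂ) := by
    intro T i c hc
    rw [← ContinuousLinearMap.adjoint_inner_left]
    rw [hlh, hkh]
    simp only
    rw [RCLike.real_smul_eq_coe_smul (K := ℂ) (‖l (lam i)‖⁻¹),
      RCLike.real_smul_eq_coe_smul (K := ℂ) (‖k (lam i)‖⁻¹)]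
    rw [map_smul, hc, inner_smul_right, inner_smul_left, inner_smul_left,
      inner_self_eq_norm_sq_to_K]
    push_cast
    simp only [map_inv₀, RCLike.conj_ofReal]
    field_simp [knzC i, lnzC i]
    change (‖k (lam i)‖ : ℂ) * _ * (‖l (lam i)‖ : ℂ) = (‖l (lam i)‖ : ℂ) * _ * (‖k (lam i)‖ : ℂ)
    ring
  have hsurj : Function.Surjective E := by
    intro b
    obtain ⟨φ, T, hmult, hval⟩ := hint (fun i => b i) ⟨‖b‖, fun i => b.norm_coe_le_norm i⟩
    have hTmem : T ∈ M := fun x => ⟨(starRingEnd ℂ) (φ x), hmult x⟩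
    refine ⟨⟨T, hTmem⟩, ?_⟩
    ext i
    rw [hEapp]
    rw [hcomp T i _ (hmult (lam i)), hval i]
    simp only [Complex.conj_conj]
    have h1 := knzC i; have h2 := lnzC i
    field_simp
  obtain ⟨C, hC0, hCs⟩ := ContinuousLinearMap.exists_preimage_norm_le (σ := RingHom.id ℂ) (σ' := RingHom.id ℂ) (E := ↥M) (F := ℕ →ᵇ ℂ) E hsurj
  refine ⟨C, hC0, ?_⟩
  intro ε hε
  set b : ℕ →ᵇ ℂ := BoundedContinuousFunction.ofNormedAddCommGroupDiscrete ε 1 hε with hb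
  obtain ⟨Tm, hTb, hTnorm⟩ := hCs b
  have hbnorm : ‖b‖ ≤ 1 := (BoundedContinuousFunction.norm_le zero_le_one).2 hε
  refine ⟨(Tm : Hk →L[ℂ] Hl), ?_, ?_⟩
  · calc ‖(Tm : Hk →L[ℂ] Hl)‖ = ‖Tm‖ := rfl
      _ ≤ C * ‖b‖ := hTnorm
      _ ≤ C * 1 := mul_le_mul_of_nonneg_left hbnorm hC0.le
      _ = C := mul_one C
  · intro i
    obtain ⟨c, hc⟩ := Tm.2 (lam i)
    have he : (starRingEnd ℂ) c * (‖k (lam i)‖ : ℂ) / (‖l (lam i)‖ : ℂ) = ε i := by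
      rw [← hcomp _ i c hc, ← hEapp, hTb]; rfl
    have hcval : c = (starRingEnd ℂ) (ε i) * (‖l (lam i)‖ : ℂ) / (‖k (lam i)‖ : ℂ) := by
      have h := congrArg (starRingEnd ℂ) he
      simp only [map_div₀, map_mul, Complex.conj_conj, RCLike.conj_ofReal, Complex.conj_ofReal] at h
      have h1 := knzC i; have h2 := lnzC i
      field_simp at h ⊢
      linear_combination h
    have hadj : ContinuousLinearMap.adjoint (Tm : Hk →L[ℂ] Hl) (lh i)
        = ((‖l (lam i)‖⁻¹ : ℝ) : ℂ) • (c • k (lam i)) := by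
      rw [hlh]
      simp only
      rw [RCLike.real_smul_eq_coe_smul (K := ℂ), map_smul, hc]
      rfl
    show ContinuousLinearMap.adjoint _ (lh i) = (starRingEnd ℂ) (ε i) • kh i
    rw [hadj, hcval, hkh]
    simp only
    rw [RCLike.real_smul_eq_coe_smul (K := ℂ) (‖k (lam i)‖⁻¹), smul_smul, smul_smul]
    congr 1
    have h1 := knzC i; have h2 := lnzC i
    push_cast
    field_simp
    exact (mul_div_cancel_right₀ _ h1).symm


/-- **Proposition 4.1 (i)**: if a sequence is interpolating for `Mult(H_k, H_ℓ)`, then the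
Gram matrix with respect to `k` is bounded and the Gram matrix with respect to `ℓ` is
bounded below. -/
theorem statement5 {X Hk Hl : Type*}
    [NormedAddCommGroup Hk] [InnerProductSpace ℂ Hk] [CompleteSpace Hk]
    [NormedAddCommGroup Hl] [InnerProductSpace ℂ Hl] [CompleteSpace Hl]
    (k : X → Hk) (hk : ∀ x, k x ≠ 0)
    (hdense_k : Dense ((Submodule.span ℂ (Set.range k) : Submodule ℂ Hk) : Set Hk))
    (l : X → Hl) (hl : ∀ x, l x ≠ 0)
    (hdense_l : Dense ((Submodule.span ℂ (Set.range l) : Submodule ℂ Hl) : Set Hl))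
    (lam : ℕ → X) (hinj : Function.Injective lam)
    (hint : InterpMultPair k l lam) :
    GramBdd k lam ∧ GramBddBelow l lam := by
  obtain ⟨C, hC0, hA⟩ := uniform_mult k hk l hl lam hint
  have knz : ∀ i, ‖k (lam i)‖ ≠ 0 := fun i => norm_ne_zero_iff.2 (hk _)
  have lnz : ∀ i, ‖l (lam i)‖ ≠ 0 := fun i => norm_ne_zero_iff.2 (hl _)
  have hkh1 : ∀ i, ‖(‖k (lam i)‖⁻¹ • k (lam i) : Hk)‖ = 1 := fun i => by
    rw [norm_smul, norm_inv, norm_norm, inv_mul_cancel₀ (knz i)]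
  have hlh1 : ∀ i, ‖(‖l (lam i)‖⁻¹ • l (lam i) : Hl)‖ = 1 := fun i => by
    rw [norm_smul, norm_inv, norm_norm, inv_mul_cancel₀ (lnz i)]
  constructor
  · refine ⟨C ^ 2, by positivity, ?_⟩
    intro F a
    obtain ⟨s, hs1, hsle⟩ := sign_choice_le (fun i => ‖l (lam i)‖⁻¹ • l (lam i)) a F
    simp only [hlh1, one_pow, mul_one] at hsle
    obtain ⟨T, hTn, hTad⟩ := hA s (fun i => (hs1 i).le)
    have key : ContinuousLinearMap.adjoint T
          (∑ i ∈ F, (s i * a i) • (‖l (lam i)‖⁻¹ • l (lam i)))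
        = ∑ i ∈ F, a i • (‖k (lam i)‖⁻¹ • k (lam i)) := by
      rw [map_sum]
      refine Finset.sum_congr rfl fun i _ => ?_
      rw [map_smul, hTad i, smul_smul]
      congr 1
      have hss : s i * (starRingEnd ℂ) (s i) = 1 := by
        rw [Complex.mul_conj]
        norm_cast
        rw [Complex.normSq_eq_norm_sq, hs1 i, one_pow]
      rw [mul_comm (s i) (a i), mul_assoc, hss, mul_one]
    calc ‖∑ i ∈ F, a i • (‖k (lam i)‖⁻¹ • k (lam i))‖ ^ 2
        = ‖ContinuousLinearMap.adjoint T
            (∑ i ∈ F, (s i * a i) • (‖l (lam i)‖⁻¹ • l (lam i)))‖ ^ 2 := by rw [key]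
      _ ≤ (‖ContinuousLinearMap.adjoint T‖ *
            ‖∑ i ∈ F, (s i * a i) • (‖l (lam i)‖⁻¹ • l (lam i))‖) ^ 2 :=
          pow_le_pow_left₀ (norm_nonneg _) (ContinuousLinearMap.le_opNorm _ _) 2
      _ = ‖T‖ ^ 2 * ‖∑ i ∈ F, (s i * a i) • (‖l (lam i)‖⁻¹ • l (lam i))‖ ^ 2 := by
          rw [mul_pow, (ContinuousLinearMap.adjoint (𝕜 := ℂ) (E := Hk) (F := Hl)).norm_map T]
      _ ≤ C ^ 2 * ∑ i ∈ F, ‖a i‖ ^ 2 :=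
          mul_le_mul (pow_le_pow_left₀ (norm_nonneg T) hTn 2) hsle (by positivity) (by positivity)
  · refine ⟨(C ^ 2)⁻¹, by positivity, ?_⟩
    intro F a
    obtain ⟨s, hs1, hsge⟩ := sign_choice_ge (fun i => ‖k (lam i)‖⁻¹ • k (lam i)) a F
    simp only [hkh1, one_pow, mul_one] at hsge
    obtain ⟨T, hTn, hTad⟩ := hA (fun i => (starRingEnd ℂ) (s i))
      (fun i => by rw [RCLike.norm_conj]; exact (hs1 i).le)
    have key : ContinuousLinearMap.adjoint T
          (∑ i ∈ F, a i • (‖l (lam i)‖⁻¹ • l (lam i)))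
        = ∑ i ∈ F, (s i * a i) • (‖k (lam i)‖⁻¹ • k (lam i)) := by
      rw [map_sum]
      refine Finset.sum_congr rfl fun i _ => ?_
      rw [map_smul, hTad i, Complex.conj_conj, smul_smul, mul_comm]
    rw [inv_mul_le_iff₀ (by positivity)]
    calc ∑ i ∈ F, ‖a i‖ ^ 2
        ≤ ‖∑ i ∈ F, (s i * a i) • (‖k (lam i)‖⁻¹ • k (lam i))‖ ^ 2 := hsge
      _ = ‖ContinuousLinearMap.adjoint T
            (∑ i ∈ F, a i • (‖l (lam i)‖⁻¹ • l (lam i)))‖ ^ 2 := by rw [key]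
      _ ≤ (‖ContinuousLinearMap.adjoint T‖ *
            ‖∑ i ∈ F, a i • (‖l (lam i)‖⁻¹ • l (lam i))‖) ^ 2 :=
          pow_le_pow_left₀ (norm_nonneg _) (ContinuousLinearMap.le_opNorm _ _) 2
      _ = ‖T‖ ^ 2 * ‖∑ i ∈ F, a i • (‖l (lam i)‖⁻¹ • l (lam i))‖ ^ 2 := by
          rw [mul_pow, (ContinuousLinearMap.adjoint (𝕜 := ℂ) (E := Hk) (F := Hl)).norm_map T]
      _ ≤ C ^ 2 * ‖∑ i ∈ F, a i • (‖l (lam i)‖⁻¹ • l (lam i))‖ ^ 2 :=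
          mul_le_mul_of_nonneg_right (pow_le_pow_left₀ (norm_nonneg T) hTn 2) (by positivity)
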